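/- Let a generalized hyperbolic triangle be determined by radii (r_i, r_j, r_k) and nonnegative inversive distances, with edge lengths cosh l_ij = cosh r_i cosh r_j + I_ij sinh r_i sinh r_j etc. and extended angles θ̃ via Λ of the law-of-cosines ratio. Then lim_{(r_i,r_j,r_k)→(0,b,c)} θ̃_i = π - Λ(I_jk) for any b, c ∈ (0, +∞], and lim_{(r_i,r_j,r_k)→(0,0,c)} θ̃_k = 0. -/

import Mathlib

open Real Set Filter

noncomputable def Lambda (x : ℝ) : ℝ :=
  if x ≤ -1 then π else if x ≤ 1 then arccos x else 0

noncomputable def arcoshLog (x : ℝ) : ℝ := Real.log (x + Real.sqrt (x ^ 2 - 1))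

/-- Hyperbolic edge length of two circles of radii `r, s` with inversive distance `I`. -/
noncomputable def hlen (r s I : ℝ) : ℝ :=
  arcoshLog (Real.cosh r * Real.cosh s + I * Real.sinh r * Real.sinh s)

/-- Extended inner angle at the vertex of radius `ri` in the generalized hyperbolic
triangle of radii `(ri, rj, rk)` and inversive distances `Iij, Ijk, Iik`. -/
noncomputable def thetaTildeI (ri rj rk Iij Ijk Iik : ℝ) : ℝ :=
  Lambda ((Real.cosh (hlen ri rj Iij) * Real.cosh (hlen ri rk Iik)
      - Real.cosh (hlen rj rk Ijk)) /
    (Real.sinh (hlen ri rj Iij) * Real.sinh (hlen ri rk Iik)))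

/- ### Auxiliary lemmas -/

lemma Lambda_eq : Lambda = Real.arccos := by
  funext x
  unfold Lambda
  split_ifs with h1 h2
  · rw [Real.arccos_of_le_neg_one h1]
  · rfl
  · rw [Real.arccos_of_one_le (le_of_not_ge h2)]

lemma cosh_arcosh {x : ℝ} (hx : 1 ≤ x) : Real.cosh (arcoshLog x) = x := by
  have h0 : (0:ℝ) ≤ x ^ 2 - 1 := by nlinarith
  have hs : Real.sqrt (x ^ 2 - 1) ^ 2 = x ^ 2 - 1 := Real.sq_sqrt h0
  have hs0 : 0 ≤ Real.sqrt (x ^ 2 - 1) := Real.sqrt_nonneg _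
  have hpos : 0 < x + Real.sqrt (x ^ 2 - 1) := by linarith
  have hinv : (x + Real.sqrt (x ^ 2 - 1)) * (x - Real.sqrt (x ^ 2 - 1)) = 1 := by nlinarith
  have he : Real.exp (arcoshLog x) = x + Real.sqrt (x ^ 2 - 1) := Real.exp_log hpos
  have he' : Real.exp (-(arcoshLog x)) = x - Real.sqrt (x ^ 2 - 1) := by
    rw [Real.exp_neg, he, inv_eq_iff_eq_inv, eq_comm, inv_eq_iff_eq_inv]
    field_simp
    linarith [hinv]
  rw [Real.cosh_eq, he, he']; ring

lemma sinh_arcosh {x : ℝ} (hx : 1 ≤ x) : Real.sinh (arcoshLog x) = Real.sqrt (x ^ 2 - 1) := by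
  have h0 : (0:ℝ) ≤ x ^ 2 - 1 := by nlinarith
  have hs : Real.sqrt (x ^ 2 - 1) ^ 2 = x ^ 2 - 1 := Real.sq_sqrt h0
  have hs0 : 0 ≤ Real.sqrt (x ^ 2 - 1) := Real.sqrt_nonneg _
  have hpos : 0 < x + Real.sqrt (x ^ 2 - 1) := by linarith
  have hinv : (x + Real.sqrt (x ^ 2 - 1)) * (x - Real.sqrt (x ^ 2 - 1)) = 1 := by nlinarith
  have he : Real.exp (arcoshLog x) = x + Real.sqrt (x ^ 2 - 1) := Real.exp_log hpos
  have he' : Real.exp (-(arcoshLog x)) = x - Real.sqrt (x ^ 2 - 1) := by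
    rw [Real.exp_neg, he, inv_eq_iff_eq_inv, eq_comm, inv_eq_iff_eq_inv]
    field_simp
    linarith [hinv]
  rw [Real.sinh_eq, he, he']; ring

lemma one_le_X {r s I : ℝ} (hr : 0 ≤ r) (hs : 0 ≤ s) (hI : 0 ≤ I) :
    1 ≤ Real.cosh r * Real.cosh s + I * Real.sinh r * Real.sinh s := by
  have h1 := Real.one_le_cosh r
  have h2 := Real.one_le_cosh s
  have h3 : 0 ≤ Real.sinh r := by rw [← Real.sinh_zero]; exact Real.sinh_le_sinh.2 hr
  have h4 : 0 ≤ Real.sinh s := by rw [← Real.sinh_zero]; exact Real.sinh_le_sinh.2 hs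
  nlinarith [mul_nonneg h3 h4, mul_nonneg hI (mul_nonneg h3 h4)]

lemma cosh_hlen {r s I : ℝ} (hr : 0 ≤ r) (hs : 0 ≤ s) (hI : 0 ≤ I) :
    Real.cosh (hlen r s I)
      = Real.cosh r * Real.cosh s + I * Real.sinh r * Real.sinh s :=
  _root_.cosh_arcosh (one_le_X hr hs hI)

lemma sinh_hlen {r s I : ℝ} (hr : 0 ≤ r) (hs : 0 ≤ s) (hI : 0 ≤ I) :
    Real.sinh (hlen r s I)
      = Real.sqrt ((Real.cosh r * Real.cosh s + I * Real.sinh r * Real.sinh s) ^ 2 - 1) :=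
  _root_.sinh_arcosh (one_le_X hr hs hI)

lemma sqrt_rescale {X t : ℝ} (hX : 1 ≤ X) (ht : 0 < t) :
    Real.sqrt ((X / Real.sinh t) ^ 2 - (Real.cosh t / Real.sinh t) ^ 2 + 1)
      = Real.sqrt (X ^ 2 - 1) / Real.sinh t := by
  have hs : 0 < Real.sinh t := Real.sinh_pos_iff.2 ht
  have hid : Real.cosh t ^ 2 = Real.sinh t ^ 2 + 1 := Real.cosh_sq t
  have h1 : (X / Real.sinh t) ^ 2 - (Real.cosh t / Real.sinh t) ^ 2 + 1
      = (X ^ 2 - 1) / Real.sinh t ^ 2 := by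
    field_simp
    linarith
  rw [h1, Real.sqrt_div (by nlinarith : (0:ℝ) ≤ X ^ 2 - 1),
    Real.sqrt_sq hs.le]

noncomputable def F1 (Iij Ijk Iik : ℝ) (q : ℝ × ℝ × ℝ) : ℝ :=
  ((Real.cosh q.1 * q.2.1 + Iij * Real.sinh q.1)
      * (Real.cosh q.1 * q.2.2 + Iik * Real.sinh q.1) - (q.2.1 * q.2.2 + Ijk)) /
    (Real.sqrt ((Real.cosh q.1 * q.2.1 + Iij * Real.sinh q.1) ^ 2 - q.2.1 ^ 2 + 1)
      * Real.sqrt ((Real.cosh q.1 * q.2.2 + Iik * Real.sinh q.1) ^ 2 - q.2.2 ^ 2 + 1))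

noncomputable def F2 (Iij Ijk Iik : ℝ) (q : ℝ × ℝ × ℝ) : ℝ :=
  ((Real.cosh q.1 * q.2.2 + Iik * Real.sinh q.1)
      * (Real.cosh q.2.1 * q.2.2 + Ijk * Real.sinh q.2.1)
    - (Real.cosh q.1 * Real.cosh q.2.1 + Iij * Real.sinh q.1 * Real.sinh q.2.1)
        * (q.2.2 ^ 2 - 1)) /
    (Real.sqrt ((Real.cosh q.1 * q.2.2 + Iik * Real.sinh q.1) ^ 2 - q.2.2 ^ 2 + 1)
      * Real.sqrt ((Real.cosh q.2.1 * q.2.2 + Ijk * Real.sinh q.2.1) ^ 2 - q.2.2 ^ 2 + 1))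

lemma ratio_eq1 {Iij Ijk Iik ε rj rk : ℝ} (hIij : 0 ≤ Iij) (hIjk : 0 ≤ Ijk) (hIik : 0 ≤ Iik)
    (hε : 0 < ε) (hrj : 0 < rj) (hrk : 0 < rk) :
    (Real.cosh (hlen ε rj Iij) * Real.cosh (hlen ε rk Iik) - Real.cosh (hlen rj rk Ijk)) /
      (Real.sinh (hlen ε rj Iij) * Real.sinh (hlen ε rk Iik))
    = F1 Iij Ijk Iik (ε, Real.cosh rj / Real.sinh rj, Real.cosh rk / Real.sinh rk) := by
  have hs1 : 0 < Real.sinh rj := Real.sinh_pos_iff.2 hrj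
  have hs2 : 0 < Real.sinh rk := Real.sinh_pos_iff.2 hrk
  have hse : 0 < Real.sinh ε := Real.sinh_pos_iff.2 hε
  set X1 := Real.cosh ε * Real.cosh rj + Iij * Real.sinh ε * Real.sinh rj with hX1def
  set X2 := Real.cosh ε * Real.cosh rk + Iik * Real.sinh ε * Real.sinh rk with hX2def
  have hX1 : 1 < X1 := by
    have h1 := Real.one_lt_cosh.2 hε.ne'
    have h2 := Real.one_le_cosh rj
    nlinarith [mul_nonneg hIij (mul_nonneg hse.le hs1.le)]
  have hX2 : 1 < X2 := by
    have h1 := Real.one_lt_cosh.2 hε.ne'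
    have h2 := Real.one_le_cosh rk
    nlinarith [mul_nonneg hIik (mul_nonneg hse.le hs2.le)]
  have hS1 : 0 < Real.sqrt (X1 ^ 2 - 1) := Real.sqrt_pos.2 (by nlinarith)
  have hS2 : 0 < Real.sqrt (X2 ^ 2 - 1) := Real.sqrt_pos.2 (by nlinarith)
  have e1 : Real.cosh ε * (Real.cosh rj / Real.sinh rj) + Iij * Real.sinh ε
      = X1 / Real.sinh rj := by field_simp [hX1def]; rw [hX1def]; ring
  have e2 : Real.cosh ε * (Real.cosh rk / Real.sinh rk) + Iik * Real.sinh ε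
      = X2 / Real.sinh rk := by field_simp [hX2def]; rw [hX2def]; ring
  rw [cosh_hlen hε.le hrj.le hIij, cosh_hlen hε.le hrk.le hIik,
    cosh_hlen hrj.le hrk.le hIjk, sinh_hlen hε.le hrj.le hIij, sinh_hlen hε.le hrk.le hIik]
  simp only [F1, ← hX1def, ← hX2def]
  rw [e1, e2, sqrt_rescale hX1.le hrj, sqrt_rescale hX2.le hrk]
  rw [div_eq_div_iff (by positivity) (by positivity)]
  field_simp

lemma ratio_eq2 {Iij Ijk Iik ri rj rk : ℝ} (hIij : 0 ≤ Iij) (hIjk : 0 ≤ Ijk) (hIik : 0 ≤ Iik)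
    (hri : 0 < ri) (hrj : 0 < rj) (hrk : 0 < rk) :
    (Real.cosh (hlen rk ri Iik) * Real.cosh (hlen rk rj Ijk) - Real.cosh (hlen ri rj Iij)) /
      (Real.sinh (hlen rk ri Iik) * Real.sinh (hlen rk rj Ijk))
    = F2 Iij Ijk Iik (ri, rj, Real.cosh rk / Real.sinh rk) := by
  have hs1 : 0 < Real.sinh ri := Real.sinh_pos_iff.2 hri
  have hs2 : 0 < Real.sinh rj := Real.sinh_pos_iff.2 hrj
  have hsk : 0 < Real.sinh rk := Real.sinh_pos_iff.2 hrk
  set X1 := Real.cosh rk * Real.cosh ri + Iik * Real.sinh rk * Real.sinh ri with hX1def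
  set X2 := Real.cosh rk * Real.cosh rj + Ijk * Real.sinh rk * Real.sinh rj with hX2def
  have hX1 : 1 < X1 := by
    have h1 := Real.one_lt_cosh.2 hrk.ne'
    have h2 := Real.one_le_cosh ri
    nlinarith [mul_nonneg hIik (mul_nonneg hsk.le hs1.le)]
  have hX2 : 1 < X2 := by
    have h1 := Real.one_lt_cosh.2 hrk.ne'
    have h2 := Real.one_le_cosh rj
    nlinarith [mul_nonneg hIjk (mul_nonneg hsk.le hs2.le)]
  have hS1 : 0 < Real.sqrt (X1 ^ 2 - 1) := Real.sqrt_pos.2 (by nlinarith)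
  have hS2 : 0 < Real.sqrt (X2 ^ 2 - 1) := Real.sqrt_pos.2 (by nlinarith)
  have e1 : Real.cosh ri * (Real.cosh rk / Real.sinh rk) + Iik * Real.sinh ri
      = X1 / Real.sinh rk := by field_simp [hX1def]; ring
  have e2 : Real.cosh rj * (Real.cosh rk / Real.sinh rk) + Ijk * Real.sinh rj
      = X2 / Real.sinh rk := by field_simp [hX2def]; ring
  have hw : (Real.cosh rk / Real.sinh rk) ^ 2 - 1 = 1 / Real.sinh rk ^ 2 := by
    have h := Real.cosh_sq rk
    have hne : Real.sinh rk ^ 2 ≠ 0 := by positivity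
    field_simp
    linarith
  rw [cosh_hlen hrk.le hri.le hIik, cosh_hlen hrk.le hrj.le hIjk,
    cosh_hlen hri.le hrj.le hIij, sinh_hlen hrk.le hri.le hIik, sinh_hlen hrk.le hrj.le hIjk]
  simp only [F2, ← hX1def, ← hX2def]
  rw [e1, e2, hw, sqrt_rescale hX1.le hrk, sqrt_rescale hX2.le hrk]
  rw [div_eq_div_iff (by positivity) (by positivity)]
  field_simp

lemma coth_tendsto_atTop : Tendsto (fun r => Real.cosh r / Real.sinh r) atTop (nhds 1) := by
  have heq : ∀ r : ℝ, Real.cosh r / Real.sinh r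
      = (1 + Real.exp (-(2 * r))) / (1 - Real.exp (-(2 * r))) := by
    intro r
    have h2 : Real.exp r * Real.exp (-r) = 1 := by rw [← Real.exp_add]; simp
    have h3 : Real.exp (-r) * Real.exp (-r) = Real.exp (-(2 * r)) := by
      rw [← Real.exp_add]; ring_nf
    have hc : Real.cosh r * (2 * Real.exp (-r)) = 1 + Real.exp (-(2 * r)) := by
      rw [Real.cosh_eq]; linear_combination h2 + h3
    have hs : Real.sinh r * (2 * Real.exp (-r)) = 1 - Real.exp (-(2 * r)) := by
      rw [Real.sinh_eq]; linear_combination h2 - h3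
    have hne : 2 * Real.exp (-r) ≠ 0 := by positivity
    rw [← hc, ← hs, mul_div_mul_right _ _ hne]
  have hx : Tendsto (fun r : ℝ => Real.exp (-(2 * r))) atTop (nhds 0) := by
    have h2 : Tendsto (fun r : ℝ => 2 * r) atTop atTop :=
      Tendsto.const_mul_atTop two_pos tendsto_id
    have h1 : Tendsto (fun r : ℝ => -(2 * r)) atTop atBot :=
      tendsto_neg_atTop_atBot.comp h2
    exact Real.tendsto_exp_atBot.comp h1
  have hone : Tendsto (fun _ : ℝ => (1:ℝ)) atTop (nhds 1) := tendsto_const_nhds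
  have := (hone.add hx).div (hone.sub hx) (by norm_num : (1:ℝ) - 0 ≠ 0)
  simp only [add_zero, sub_zero, div_one] at this
  exact this.congr fun r => (heq r).symm

lemma coth_lim {l : Filter ℝ} (h : l = atTop ∨ ∃ b : ℝ, 0 < b ∧ l = nhds b) :
    ∃ u₀ : ℝ, Tendsto (fun r => Real.cosh r / Real.sinh r) l (nhds u₀) ∧ ∀ᶠ r in l, 0 < r := by
  rcases h with rfl | ⟨b, hb, rfl⟩
  · exact ⟨1, coth_tendsto_atTop, eventually_gt_atTop 0⟩
  · refine ⟨Real.cosh b / Real.sinh b, ?_, eventually_gt_nhds hb⟩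
    exact (Real.continuous_cosh.continuousAt.div Real.continuous_sinh.continuousAt
      (Real.sinh_pos_iff.2 hb).ne')

lemma F1_tendsto (Iij Ijk Iik u₀ v₀ : ℝ) :
    Tendsto (F1 Iij Ijk Iik) (nhds ((0:ℝ), u₀, v₀)) (nhds (-Ijk)) := by
  have hc : ContinuousAt (F1 Iij Ijk Iik) ((0:ℝ), u₀, v₀) := by
    unfold F1
    apply ContinuousAt.div
    · fun_prop
    · fun_prop
    · simp [Real.cosh_zero, Real.sinh_zero]
  have hval : F1 Iij Ijk Iik ((0:ℝ), u₀, v₀) = -Ijk := by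
    simp [F1, Real.cosh_zero, Real.sinh_zero]
  simpa [hval] using hc.tendsto

lemma F2_tendsto (Iij Ijk Iik w₀ : ℝ) :
    Tendsto (F2 Iij Ijk Iik) (nhds ((0:ℝ), (0:ℝ), w₀)) (nhds 1) := by
  have hc : ContinuousAt (F2 Iij Ijk Iik) ((0:ℝ), (0:ℝ), w₀) := by
    unfold F2
    apply ContinuousAt.div
    · fun_prop
    · fun_prop
    · simp [Real.cosh_zero, Real.sinh_zero]
  have hval : F2 Iij Ijk Iik ((0:ℝ), (0:ℝ), w₀) = 1 := by
    simp [F2, Real.cosh_zero, Real.sinh_zero]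
    ring
  simpa [hval] using hc.tendsto

/-- Degeneration limits: `θ̃_i → π - Λ(I_jk)` as `(r_i, r_j, r_k) → (0, b, c)` for any
`b, c ∈ (0, +∞]`, and `θ̃_k → 0` as `(r_i, r_j, r_k) → (0, 0, c)`.  A possibly infinite
limit `b ∈ (0, +∞]` is encoded by a filter `lb` which is either `atTop` or `nhds b`
for some finite `b > 0`. -/
theorem degenerate_angle_limits (Iij Ijk Iik : ℝ)
    (hIij : 0 ≤ Iij) (hIjk : 0 ≤ Ijk) (hIik : 0 ≤ Iik)
    (lb lc : Filter ℝ)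
    (hlb : lb = atTop ∨ ∃ b : ℝ, 0 < b ∧ lb = nhds b)
    (hlc : lc = atTop ∨ ∃ c : ℝ, 0 < c ∧ lc = nhds c) :
    Tendsto (fun p : ℝ × ℝ × ℝ => thetaTildeI p.1 p.2.1 p.2.2 Iij Ijk Iik)
      ((nhdsWithin 0 (Ioi 0)) ×ˢ lb ×ˢ lc) (nhds (π - Lambda Ijk)) ∧
    Tendsto (fun p : ℝ × ℝ × ℝ => thetaTildeI p.2.2 p.1 p.2.1 Iik Iij Ijk)
      ((nhdsWithin 0 (Ioi 0)) ×ˢ (nhdsWithin 0 (Ioi 0)) ×ˢ lc) (nhds 0) := by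
  obtain ⟨u₀, hu, hupos⟩ := coth_lim hlb
  obtain ⟨v₀, hv, hvpos⟩ := coth_lim hlc
  have h0 : Tendsto (fun x : ℝ => x) (nhdsWithin (0:ℝ) (Ioi 0)) (nhds 0) :=
    tendsto_id.mono_left nhdsWithin_le_nhds
  have h0pos : ∀ᶠ x : ℝ in nhdsWithin (0:ℝ) (Ioi 0), 0 < x := by
    filter_upwards [self_mem_nhdsWithin] with x hx
    exact hx
  constructor
  · -- part 1
    set L := (nhdsWithin (0:ℝ) (Ioi 0)) ×ˢ lb ×ˢ lc with hL
    have hg : Tendsto (fun p : ℝ × ℝ × ℝ =>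
        (p.1, Real.cosh p.2.1 / Real.sinh p.2.1, Real.cosh p.2.2 / Real.sinh p.2.2))
        L (nhds ((0:ℝ), u₀, v₀)) := by
      rw [nhds_prod_eq, nhds_prod_eq]
      exact h0.prodMap (hu.prodMap hv)
    have hratio := (F1_tendsto Iij Ijk Iik u₀ v₀).comp hg
    have hfinal := (Real.continuous_arccos.continuousAt.tendsto).comp hratio
    have heq : (fun p : ℝ × ℝ × ℝ => Real.arccos (F1 Iij Ijk Iik
        (p.1, Real.cosh p.2.1 / Real.sinh p.2.1, Real.cosh p.2.2 / Real.sinh p.2.2)))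
        =ᶠ[L] (fun p : ℝ × ℝ × ℝ => thetaTildeI p.1 p.2.1 p.2.2 Iij Ijk Iik) := by
      filter_upwards [prod_mem_prod h0pos (prod_mem_prod hupos hvpos)] with p hp
      simp only [thetaTildeI, Lambda_eq]
      rw [ratio_eq1 hIij hIjk hIik hp.1 hp.2.1 hp.2.2]
    have hval : π - Lambda Ijk = Real.arccos (-Ijk) := by
      rw [Lambda_eq, Real.arccos_neg]
    rw [hval]
    exact Tendsto.congr' heq hfinal
  · -- part 2
    set L := (nhdsWithin (0:ℝ) (Ioi 0)) ×ˢ (nhdsWithin (0:ℝ) (Ioi 0)) ×ˢ lc with hL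
    have hg : Tendsto (fun p : ℝ × ℝ × ℝ =>
        (p.1, p.2.1, Real.cosh p.2.2 / Real.sinh p.2.2))
        L (nhds ((0:ℝ), (0:ℝ), v₀)) := by
      rw [nhds_prod_eq, nhds_prod_eq]
      exact h0.prodMap (h0.prodMap hv)
    have hratio := (F2_tendsto Iij Ijk Iik v₀).comp hg
    have hfinal := (Real.continuous_arccos.continuousAt.tendsto).comp hratio
    have heq : (fun p : ℝ × ℝ × ℝ => Real.arccos (F2 Iij Ijk Iik
        (p.1, p.2.1, Real.cosh p.2.2 / Real.sinh p.2.2)))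
        =ᶠ[L] (fun p : ℝ × ℝ × ℝ => thetaTildeI p.2.2 p.1 p.2.1 Iik Iij Ijk) := by
      filter_upwards [prod_mem_prod h0pos (prod_mem_prod h0pos hvpos)] with p hp
      simp only [thetaTildeI, Lambda_eq]
      rw [ratio_eq2 hIij hIjk hIik hp.1 hp.2.1 hp.2.2]
    have hval : (0:ℝ) = Real.arccos 1 := by rw [Real.arccos_one]
    rw [hval]
    exact Tendsto.congr' heq hfinal
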